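/- Let G and H be graphs with |V(G)| = |V(H)|. Define an instance of Seat Arrangement with agents P = V(H), seat graph G, and binary symmetric preferences f_p(q) = f_q(p) = 1 if {p,q} ∈ E(H) and 0 otherwise. Then there is a bijection g : V(G) → V(H) such that {g(u), g(v)} ∈ E(H) for every {u,v} ∈ E(G) if and only if there is an arrangement π with social welfare sw(π) = 2|E(G)|. -/

import Mathlib

open scoped Classical

noncomputable section

namespace SeatArrangement

variable {P V : Type*}

/-- The utility of agent `p` under arrangement `π`:
the sum, over the seat-graph neighbors `v` of `π p`, of `p`'s preference for the agent seated
at `v`. -/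
def utility [Fintype V] (G : SimpleGraph V) (f : P → P → ℝ) (π : P ≃ V) (p : P) : ℝ :=
  ∑ v : V, if G.Adj (π p) v then f p (π.symm v) else 0

/-- The social welfare of an arrangement: the sum of the utilities of all agents. -/
def sw [Fintype P] [Fintype V] (G : SimpleGraph V) (f : P → P → ℝ) (π : P ≃ V) : ℝ :=
  ∑ p : P, utility G f π p

/-- The `(p,q)`-swap arrangement of `π`. -/
def swapArr (π : P ≃ V) (p q : P) : P ≃ V := (Equiv.swap p q).trans π

/-- `{p, q}` is a blocking pair for `π`: both agents strictly improve by swapping seats. -/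
def blocking [Fintype V] (G : SimpleGraph V) (f : P → P → ℝ) (π : P ≃ V) (p q : P) : Prop :=
  p ≠ q ∧ utility G f π p < utility G f (swapArr π p q) p
        ∧ utility G f π q < utility G f (swapArr π p q) q

/-- An arrangement is stable if it has no blocking pair. -/
def stable [Fintype V] (G : SimpleGraph V) (f : P → P → ℝ) (π : P ≃ V) : Prop :=
  ∀ p q : P, ¬ blocking G f π p q

/-- An arrangement is envy-free if no agent would strictly improve by taking
another agent's seat (via a swap). -/
def envyFree [Fintype V] (G : SimpleGraph V) (f : P → P → ℝ) (π : P ≃ V) : Prop :=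
  ∀ p q : P, p ≠ q → utility G f (swapArr π p q) p ≤ utility G f π p

/-- The least utility of an agent under `π` (for a finite nonempty set of agents, the
infimum of the range of utilities is the minimum utility). -/
def minUtil [Fintype V] (G : SimpleGraph V) (f : P → P → ℝ) (π : P ≃ V) : ℝ :=
  sInf (Set.range (utility G f π))

/-- A maximin arrangement maximizes the least utility of an agent. -/
def maximin [Fintype V] (G : SimpleGraph V) (f : P → P → ℝ) (πf : P ≃ V) : Prop :=
  ∀ π : P ≃ V, minUtil G f π ≤ minUtil G f πf

/-- A maximum arrangement maximizes the social welfare. -/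
def maximum [Fintype P] [Fintype V] (G : SimpleGraph V) (f : P → P → ℝ) (πm : P ≃ V) : Prop :=
  ∀ π : P ≃ V, sw G f π ≤ sw G f πm

end SeatArrangement

open SeatArrangement

/-- for graphs `G`, `H` with `|V(G)| = |V(H)|`, agents `V(H)`, seat graph `G`,
and binary symmetric preferences given by adjacency in `H`, there is a bijection
`g : V(G) → V(H)` mapping edges of `G` to edges of `H` if and only if some arrangement has
social welfare `2|E(G)|`. -/
theorem spanning_subgraph_iff_max_welfare {VG VH : Type*} [Fintype VG] [Fintype VH]
    (G : SimpleGraph VG) (H : SimpleGraph VH)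
    (hcard : Fintype.card VG = Fintype.card VH) :
    (∃ g : VG → VH, Function.Bijective g ∧
      ∀ u v : VG, G.Adj u v → H.Adj (g u) (g v)) ↔
    (∃ π : VH ≃ VG,
      sw G (fun p q => if H.Adj p q then 1 else 0) π = 2 * (G.edgeSet.ncard : ℝ)) := by
  classical
  set f : VH → VH → ℝ := fun p q => if H.Adj p q then 1 else 0 with hf
  -- rewrite sw as a double sum over seats
  have hsw : ∀ π : VH ≃ VG, sw G f π =
      ∑ u : VG, ∑ v : VG,
        if G.Adj u v ∧ H.Adj (π.symm u) (π.symm v) then (1:ℝ) else 0 := by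
    intro π
    unfold sw utility
    rw [← Equiv.sum_comp π.symm (fun p : VH =>
      ∑ v : VG, if G.Adj (π p) v then f p (π.symm v) else 0)]
    refine Finset.sum_congr rfl fun u _ => Finset.sum_congr rfl fun v _ => ?_
    simp only [Equiv.apply_symm_apply, hf]
    by_cases h1 : G.Adj u v <;> by_cases h2 : H.Adj (π.symm u) (π.symm v) <;>
      simp [h1, h2]
  -- the total: sum of degrees
  have htot : (∑ u : VG, ∑ v : VG, if G.Adj u v then (1:ℝ) else 0)
      = 2 * (G.edgeSet.ncard : ℝ) := by
    have hdeg : ∀ u : VG, (∑ v : VG, if G.Adj u v then (1:ℝ) else 0)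
        = (G.degree u : ℝ) := by
      intro u
      rw [Finset.sum_boole, SimpleGraph.degree, SimpleGraph.neighborFinset_eq_filter]
    have hcardE : G.edgeSet.ncard = G.edgeFinset.card := by
      rw [Set.ncard_eq_toFinset_card']
      exact congrArg Finset.card (Finset.ext fun e => by simp)
    calc (∑ u : VG, ∑ v : VG, if G.Adj u v then (1:ℝ) else 0)
        = ∑ u : VG, (G.degree u : ℝ) := by
          exact Finset.sum_congr rfl fun u _ => hdeg u
      _ = ((∑ u : VG, G.degree u : ℕ) : ℝ) := by push_cast; ring
      _ = 2 * (G.edgeSet.ncard : ℝ) := by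
          rw [SimpleGraph.sum_degrees_eq_twice_card_edges, hcardE]
          push_cast; ring
  constructor
  · rintro ⟨g, hg, hedge⟩
    refine ⟨(Equiv.ofBijective g hg).symm, ?_⟩
    rw [hsw, ← htot]
    refine Finset.sum_congr rfl fun u _ => Finset.sum_congr rfl fun v _ => ?_
    simp only [Equiv.symm_symm, Equiv.ofBijective_apply]
    by_cases h1 : G.Adj u v
    · simp [h1, hedge u v h1]
    · simp [h1]
  · rintro ⟨π, hπ⟩
    refine ⟨π.symm, π.symm.bijective, fun u v huv => ?_⟩
    by_contra hH
    have hlt : sw G f π < 2 * (G.edgeSet.ncard : ℝ) := by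
      rw [hsw, ← htot]
      refine Finset.sum_lt_sum (fun i _ => Finset.sum_le_sum fun j _ => ?_)
        ⟨u, Finset.mem_univ u, ?_⟩
      · by_cases h1 : G.Adj i j <;> by_cases h2 : H.Adj (π.symm i) (π.symm j) <;>
          simp [h1, h2]
      · refine Finset.sum_lt_sum (fun j _ => ?_) ⟨v, Finset.mem_univ v, ?_⟩
        · by_cases h1 : G.Adj u j <;> by_cases h2 : H.Adj (π.symm u) (π.symm j) <;>
            simp [h1, h2]
        · simp [huv, hH]
    exact absurd hπ (ne_of_lt hlt)
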